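/- Let 0 = t₀ < t₁ < ⋯ < t_N = T and let a_t, b_t, c_t be given by a_t = (α_t/α_T)(SNR_T/SNR_t), b_t = α_t(1 − SNR_T/SNR_t), c_t² = σ_t²(1 − SNR_T/SNR_t) with SNR_t = α_t²/σ_t². Define the non-Markovian inference kernels q^(ρ)(x_{t_n} | x₀, x_{t_{n+1}}, x_T) = N(a_{t_n} x_T + b_{t_n} x₀ + √(c²_{t_n} − ρ_n²)·(x_{t_{n+1}} − a_{t_{n+1}} x_T − b_{t_{n+1}} x₀)/c_{t_{n+1}}, ρ_n² I), with ρ_{N−1} = c_{t_{N−1}}. Then for every 1 ≤ n ≤ N−1, the marginal q^(ρ)(x_{t_n} | x₀, x_T) equals N(a_{t_n} x_T + b_{t_n} x₀, c²_{t_n} I). -/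

import Mathlib

open MeasureTheory ProbabilityTheory

open scoped ENNReal NNReal Real

namespace BridgeAux

/-- Measurability of a translation family of measures. -/
lemma measurable_map_shift {X E : Type*} [MeasurableSpace X] [MeasurableSpace E]
    [Add E] (hadd : Measurable fun p : E × E => p.1 + p.2)
    (γ : Measure E) [SigmaFinite γ] {g : X → E} (hg : Measurable g) :
    Measurable fun x => γ.map (fun y => y + g x) := by
  apply Measure.measurable_of_measurable_coe
  intro S hS
  have hmc : ∀ c : E, Measurable fun y : E => y + c := fun c =>
    hadd.comp (measurable_id.prodMk measurable_const)
  have h1 : (fun x => γ.map (fun y => y + g x) S)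
      = fun x => ∫⁻ y, S.indicator (1 : E → ℝ≥0∞) (y + g x) ∂γ := by
    funext x
    rw [Measure.map_apply (hmc (g x)) hS]
    rw [← lintegral_indicator_one (hS.preimage (hmc (g x)))]
    refine lintegral_congr fun y => ?_
    by_cases hy : y + g x ∈ S
    · rw [Set.indicator_of_mem hy, Set.indicator_of_mem (by exact hy)]
      rfl
    · rw [Set.indicator_of_notMem hy, Set.indicator_of_notMem (by exact hy)]
  rw [h1]
  exact Measurable.lintegral_prod_right'
    ((measurable_one.indicator hS).comp (hadd.comp
      (measurable_snd.prodMk (hg.comp measurable_fst))))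

lemma measurable_gaussianReal (w : ℝ≥0) : Measurable fun m : ℝ => gaussianReal m w := by
  by_cases hw : w = 0
  · subst hw
    simpa [gaussianReal_zero_var] using Measure.measurable_dirac
  · have h : (fun m : ℝ => gaussianReal m w)
        = fun m => (gaussianReal 0 w).map (fun y => y + m) := by
      funext m
      rw [gaussianReal_map_add_const m, zero_add]
    rw [h]
    exact measurable_map_shift (measurable_fst.add measurable_snd) _ measurable_id

lemma gaussianPDFReal_mul_gaussianPDFReal (m y : ℝ) {u w : ℝ≥0} (hu : u ≠ 0) (hw : w ≠ 0)
    (z : ℝ) :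
    gaussianPDFReal m u z * gaussianPDFReal z w y
      = gaussianPDFReal m (u + w) y
        * gaussianPDFReal ((w * m + u * y) / (u + w)) (u * w / (u + w)) z := by
  have hU : 0 < (u : ℝ) := by positivity
  have hW : 0 < (w : ℝ) := by positivity
  have hUW : 0 < (u : ℝ) + w := by positivity
  unfold gaussianPDFReal
  have hcoe1 : ((u + w : ℝ≥0) : ℝ) = (u : ℝ) + w := by push_cast; ring
  have hcoe2 : ((u * w / (u + w) : ℝ≥0) : ℝ) = (u : ℝ) * w / ((u : ℝ) + w) := by
    push_cast; ring
  rw [hcoe1, hcoe2]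
  rw [mul_mul_mul_comm, ← Real.exp_add, mul_mul_mul_comm, ← Real.exp_add]
  congr 1
  · rw [← mul_inv, ← mul_inv, ← Real.sqrt_mul (by positivity), ← Real.sqrt_mul (by positivity)]
    congr 2
    field_simp
  · congr 1
    field_simp
    ring

lemma lintegral_gaussianPDF_mul (m y : ℝ) {u w : ℝ≥0} (hu : u ≠ 0) (hw : w ≠ 0) :
    ∫⁻ z, gaussianPDF m u z * gaussianPDF z w y = gaussianPDF m (u + w) y := by
  have hτ : u * w / (u + w) ≠ 0 := by
    refine div_ne_zero (mul_ne_zero hu hw) ?_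
    simp [add_eq_zero, hu]
  have hpt : ∀ z, gaussianPDF m u z * gaussianPDF z w y
      = gaussianPDF m (u + w) y * gaussianPDF ((w * m + u * y) / (u + w)) (u * w / (u + w)) z := by
    intro z
    unfold gaussianPDF
    rw [← ENNReal.ofReal_mul (gaussianPDFReal_nonneg _ _ _),
      ← ENNReal.ofReal_mul (gaussianPDFReal_nonneg _ _ _),
      gaussianPDFReal_mul_gaussianPDFReal m y hu hw z]
  simp_rw [hpt]
  rw [lintegral_const_mul _ (measurable_gaussianPDF _ _), lintegral_gaussianPDF_eq_one _ hτ,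
    mul_one]

lemma gaussianReal_bind_gaussianReal (m : ℝ) {u w : ℝ≥0} (hu : u ≠ 0) (hw : w ≠ 0) :
    (gaussianReal m u).bind (fun z => gaussianReal z w) = gaussianReal m (u + w) := by
  have huw : u + w ≠ 0 := by simp [add_eq_zero, hu]
  have hjoint : Measurable fun p : ℝ × ℝ => gaussianPDF p.1 w p.2 := by
    unfold gaussianPDF gaussianPDFReal
    exact ((((measurable_snd.sub measurable_fst).pow_const 2).neg.div_const _).exp.const_mul
      _).ennreal_ofReal
  ext t ht
  rw [Measure.bind_apply ht (measurable_gaussianReal w).aemeasurable, gaussianReal_apply m huw t]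
  have h1 : ∀ z : ℝ, gaussianReal z w t = ∫⁻ y in t, gaussianPDF z w y := fun z =>
    gaussianReal_apply z hw t
  simp_rw [h1]
  rw [gaussianReal_of_var_ne_zero m hu]
  have hF : Measurable fun z : ℝ => ∫⁻ y in t, gaussianPDF z w y :=
    Measurable.lintegral_prod_right' hjoint
  rw [lintegral_withDensity_eq_lintegral_mul _ (measurable_gaussianPDF m u) hF]
  simp only [Pi.mul_apply]
  have h2 : ∀ z : ℝ, gaussianPDF m u z * ∫⁻ y in t, gaussianPDF z w y
      = ∫⁻ y in t, gaussianPDF m u z * gaussianPDF z w y := by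
    intro z
    rw [lintegral_const_mul _ (measurable_gaussianPDF _ _)]
  simp_rw [h2]
  rw [lintegral_lintegral_swap (((measurable_gaussianPDF m u).comp
    measurable_fst).mul hjoint).aemeasurable]
  congr 1
  funext y
  exact lintegral_gaussianPDF_mul m y hu hw

/-- Bind of a Gaussian through an affine Gaussian kernel. -/
lemma gauss_bind (m A s : ℝ) (v : ℝ≥0) {w : ℝ} (hw : 0 ≤ w) :
    (gaussianReal m v).bind (fun x => gaussianReal (A + s * x) w.toNNReal)
      = gaussianReal (A + s * m) (Real.toNNReal (s ^ 2 * (v : ℝ) + w)) := by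
  have hker : Measurable fun z : ℝ => gaussianReal z w.toNNReal := measurable_gaussianReal _
  have haff : Measurable fun x : ℝ => A + s * x := (measurable_const_mul s).const_add A
  have hstep1 : (gaussianReal m v).bind (fun x => gaussianReal (A + s * x) w.toNNReal)
      = ((gaussianReal m v).map (fun x => A + s * x)).bind
          (fun z => gaussianReal z w.toNNReal) := by
    simp only [Measure.bind]
    rw [Measure.map_map hker haff]
    rfl
  have hsq : Real.toNNReal (s ^ 2) = ⟨s ^ 2, sq_nonneg s⟩ :=
    Real.toNNReal_of_nonneg (sq_nonneg s)
  have hstep2 : (gaussianReal m v).map (fun x : ℝ => A + s * x)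
      = gaussianReal (s * m + A) (Real.toNNReal (s ^ 2) * v) := by
    have hcomp : (fun x : ℝ => A + s * x) = (fun y => y + A) ∘ (fun x => s * x) := by
      funext x; simp [add_comm]
    rw [hcomp, ← Measure.map_map (measurable_add_const A) (measurable_const_mul s),
      gaussianReal_map_const_mul s, gaussianReal_map_add_const A, hsq]
    rfl
  rw [hstep1, hstep2]
  have hfinal : (gaussianReal (s * m + A) (Real.toNNReal (s ^ 2) * v)).bind
      (fun z => gaussianReal z w.toNNReal)
      = gaussianReal (s * m + A) (Real.toNNReal (s ^ 2) * v + w.toNNReal) := by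
    by_cases hu : Real.toNNReal (s ^ 2) * v = 0
    · rw [hu, gaussianReal_zero_var, Measure.dirac_bind hker, zero_add]
    · by_cases hw0 : w.toNNReal = 0
      · have hd : (fun z : ℝ => gaussianReal z w.toNNReal) = Measure.dirac := by
          funext z; rw [hw0, gaussianReal_zero_var]
        rw [hd, Measure.bind_dirac, hw0, add_zero]
      · exact gaussianReal_bind_gaussianReal _ hu hw0
  rw [hfinal]
  congr 1
  · ring
  · refine NNReal.coe_injective ?_
    rw [NNReal.coe_add, NNReal.coe_mul, Real.coe_toNNReal _ (sq_nonneg s),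
      Real.coe_toNNReal _ hw, Real.coe_toNNReal _ (by positivity)]

/-- Lintegral of a product of coordinate functions over a product measure. -/
lemma lintegral_pi_prod : ∀ (n : ℕ) (μ : Fin n → Measure ℝ),
    (∀ i, IsProbabilityMeasure (μ i)) → ∀ (f : Fin n → ℝ → ℝ≥0∞), (∀ i, Measurable (f i)) →
    ∫⁻ x : Fin n → ℝ, ∏ i, f i (x i) ∂Measure.pi μ = ∏ i, ∫⁻ y, f i y ∂μ i := by
  intro n
  induction n with
  | zero =>
    intro μ hμ f hf
    haveI : ∀ i, SigmaFinite (μ i) := fun i => by haveI := hμ i; infer_instance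
    simp [Measure.pi_univ]
  | succ n ih =>
    intro μ hμ f hf
    haveI : ∀ i, SigmaFinite (μ i) := fun i => by haveI := hμ i; infer_instance
    haveI : ∀ j : Fin n, IsProbabilityMeasure (μ (Fin.succAbove 0 j)) := fun j => hμ _
    have hmp := measurePreserving_piFinSuccAbove μ 0
    set G : ℝ × (Fin n → ℝ) → ℝ≥0∞ :=
      fun p => f 0 p.1 * ∏ j, f (Fin.succAbove 0 j) (p.2 j) with hG
    have hGm : Measurable G := by
      apply Measurable.mul
      · exact (hf 0).comp measurable_fst
      · exact Finset.measurable_prod _ fun j _ =>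
          (hf _).comp ((measurable_pi_apply j).comp measurable_snd)
    have h1 : ∫⁻ x : Fin (n + 1) → ℝ, ∏ i, f i (x i) ∂Measure.pi μ
        = ∫⁻ p, G p ∂((μ 0).prod (Measure.pi fun j => μ (Fin.succAbove 0 j))) := by
      rw [← hmp.lintegral_comp hGm]
      refine lintegral_congr fun x => ?_
      rw [Fin.prod_univ_succAbove (fun i => f i (x i)) 0]
      rfl
    rw [h1, lintegral_prod _ hGm.aemeasurable]
    have h2 : ∀ y : ℝ, ∫⁻ z, G (y, z) ∂(Measure.pi fun j => μ (Fin.succAbove 0 j))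
        = f 0 y * ∏ j, ∫⁻ x, f (Fin.succAbove 0 j) x ∂μ (Fin.succAbove 0 j) := by
      intro y
      simp only [hG]
      rw [lintegral_const_mul _ (show Measurable fun z : Fin n → ℝ =>
        ∏ j, f (Fin.succAbove 0 j) (z j) from Finset.measurable_prod _ fun j _ =>
          (hf _).comp (measurable_pi_apply j))]
      rw [ih (fun j => μ (Fin.succAbove 0 j)) (fun j => hμ _)
        (fun j => f (Fin.succAbove 0 j)) (fun j => hf _)]
    simp_rw [h2]
    rw [lintegral_mul_const _ (hf 0), Fin.prod_univ_succAbove (fun i => ∫⁻ y, f i y ∂μ i) 0]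

lemma pi_gauss_eq_map {d : ℕ} (cc : Fin d → ℝ) (w : ℝ≥0) :
    Measure.pi (fun i => gaussianReal (cc i) w)
      = (Measure.pi fun _ : Fin d => gaussianReal 0 w).map (fun y => y + cc) := by
  have hshift : Measurable fun y : Fin d → ℝ => y + cc :=
    measurable_pi_lambda _ fun i => by exact (measurable_pi_apply i : Measurable fun x : Fin d → ℝ => x i).add_const (cc i)
  refine Measure.pi_eq (μ := fun i => gaussianReal (cc i) w) fun S hS => ?_
  rw [Measure.map_apply hshift (MeasurableSet.univ_pi hS)]
  have hpre : (fun y : Fin d → ℝ => y + cc) ⁻¹' Set.pi Set.univ S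
      = Set.pi Set.univ fun i => (fun z : ℝ => z + cc i) ⁻¹' S i := by
    ext y; simp [Set.mem_pi]
  rw [hpre, Measure.pi_pi]
  refine Finset.prod_congr rfl fun i _ => ?_
  rw [← Measure.map_apply (measurable_add_const (cc i)) (hS i),
    gaussianReal_map_add_const (cc i), zero_add]

lemma measurable_pi_gauss {d : ℕ} (A : Fin d → ℝ) (s : ℝ) (w : ℝ≥0) :
    Measurable fun x : Fin d → ℝ =>
      Measure.pi (fun i => gaussianReal (A i + s * x i) w) := by
  have h : (fun x : Fin d → ℝ => Measure.pi (fun i => gaussianReal (A i + s * x i) w))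
      = fun x => (Measure.pi fun _ : Fin d => gaussianReal 0 w).map
          (fun y => y + fun i => A i + s * x i) := by
    funext x
    exact pi_gauss_eq_map (fun i => A i + s * x i) w
  rw [h]
  have hadd : Measurable fun p : (Fin d → ℝ) × (Fin d → ℝ) => p.1 + p.2 :=
    measurable_pi_lambda _ fun i =>
      ((measurable_pi_apply i).comp measurable_fst).add
        ((measurable_pi_apply i).comp measurable_snd)
  exact measurable_map_shift hadd _
    (measurable_pi_lambda _ fun i => by exact ((measurable_pi_apply i : Measurable fun x : Fin d → ℝ => x i).const_mul s).const_add (A i))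

lemma pi_bind {d : ℕ} (m A B : Fin d → ℝ) (s : ℝ) (v w u : ℝ≥0)
    (h1 : ∀ i, (gaussianReal (m i) v).bind (fun z => gaussianReal (A i + s * z) w)
      = gaussianReal (B i) u) :
    (Measure.pi fun i => gaussianReal (m i) v).bind
      (fun x => Measure.pi fun i => gaussianReal (A i + s * x i) w)
      = Measure.pi fun i => gaussianReal (B i) u := by
  refine (Measure.pi_eq (μ := fun i => gaussianReal (B i) u) fun S hS => ?_).symm
  rw [Measure.bind_apply (MeasurableSet.univ_pi hS) (measurable_pi_gauss A s w).aemeasurable]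
  have h2 : ∀ x : Fin d → ℝ,
      (Measure.pi fun i => gaussianReal (A i + s * x i) w) (Set.pi Set.univ S)
        = ∏ i, (fun z => gaussianReal (A i + s * z) w (S i)) (x i) := fun x =>
    Measure.pi_pi _ _
  simp_rw [h2]
  rw [lintegral_pi_prod d (fun i => gaussianReal (m i) v) (fun i => inferInstance)
    (fun i z => gaussianReal (A i + s * z) w (S i))
    (fun i => (Measure.measurable_coe (hS i)).comp
      (show Measurable fun z : ℝ => gaussianReal (A i + s * z) w from
        (measurable_gaussianReal w).comp ((measurable_const_mul s).const_add (A i))))]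
  refine Finset.prod_congr rfl fun i _ => ?_
  rw [← Measure.bind_apply (hS i) (show Measurable fun z : ℝ => gaussianReal (A i + s * z) w from
    (measurable_gaussianReal w).comp ((measurable_const_mul s).const_add (A i))).aemeasurable, h1 i]

end BridgeAux

/-- Backward chain of measures: `chain ν K 0 = ν` and
`chain ν K (k+1) = (chain ν K k).bind (K k)`. -/
noncomputable def chain {E : Type*} [MeasurableSpace E]
    (ν : Measure E) (K : ℕ → E → Measure E) : ℕ → Measure E
  | 0 => ν
  | k + 1 => (chain ν K k).bind (K k)

/-- Marginal preservation for the non-Markovian diffusion bridges: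
with bridge coefficients `a_t, b_t, c_t` and inference kernels
`q^(ρ)(x_{t_n} | x₀, x_{t_{n+1}}, x_T)` with `ρ_{N-1} = c_{t_{N-1}}`,
the marginal at `t_n` is `N(a_{t_n} x_T + b_{t_n} x₀, c_{t_n}² I)`
for every `1 ≤ n ≤ N-1`. -/
theorem nonMarkovian_bridge_marginal
    (d N : ℕ) (hN : 2 ≤ N) (t : ℕ → ℝ) (T : ℝ) (htT : t N = T)
    (ht0 : t 0 = 0) (htmono : ∀ m n, m < n → n ≤ N → t m < t n)
    (α σ : ℝ → ℝ) (hα : ∀ s, 0 < α s) (hσpos : ∀ n, 1 ≤ n → n ≤ N → 0 < σ (t n))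
    (SNR a b : ℝ → ℝ) (c : ℝ → ℝ)
    (hSNR : ∀ s, SNR s = α s ^ 2 / σ s ^ 2)
    (ha : ∀ s, a s = (α s / α T) * (SNR T / SNR s))
    (hb : ∀ s, b s = α s * (1 - SNR T / SNR s))
    (hc : ∀ s, 0 ≤ c s ∧ c s ^ 2 = σ s ^ 2 * (1 - SNR T / SNR s))
    (hSNRord : ∀ n, 1 ≤ n → n < N → SNR T < SNR (t n))
    (ρ : ℕ → ℝ) (hρ : ∀ n, 0 ≤ ρ n ∧ ρ n ≤ c (t n)) (hρtop : ρ (N - 1) = c (t (N - 1)))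
    (x₀ xT : Fin d → ℝ)
    -- the inference kernel from `x_{t_{n+1}}` to `x_{t_n}` (given `x₀, x_T`)
    (K : ℕ → (Fin d → ℝ) → Measure (Fin d → ℝ))
    (hK : ∀ k, ∀ x : Fin d → ℝ,
      K k x = Measure.pi (fun i => gaussianReal
        (a (t (N - 2 - k)) * xT i + b (t (N - 2 - k)) * x₀ i +
          Real.sqrt (c (t (N - 2 - k)) ^ 2 - ρ (N - 2 - k) ^ 2) *
            (x i - a (t (N - 1 - k)) * xT i - b (t (N - 1 - k)) * x₀ i) /
              c (t (N - 1 - k)))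
        (Real.toNNReal (ρ (N - 2 - k) ^ 2))))
    -- the marginal at the top index `n = N - 1` (where `ρ_{N-1} = c_{t_{N-1}}`)
    (ν : Measure (Fin d → ℝ))
    (hν : ν = Measure.pi (fun i => gaussianReal
      (a (t (N - 1)) * xT i + b (t (N - 1)) * x₀ i)
      (Real.toNNReal (c (t (N - 1)) ^ 2)))) :
    ∀ n, 1 ≤ n → n ≤ N - 1 →
      chain ν K (N - 1 - n) = Measure.pi (fun i => gaussianReal
        (a (t n) * xT i + b (t n) * x₀ i) (Real.toNNReal (c (t n) ^ 2))) := by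
  have hσT : 0 < σ T := htT ▸ hσpos N (by omega) le_rfl
  have hSNRT : 0 < SNR T := by
    rw [hSNR]
    have := hα T
    positivity
  have hcpos : ∀ n, 1 ≤ n → n ≤ N - 1 → 0 < c (t n) := by
    intro n h1 h2
    have hσn : 0 < σ (t n) := hσpos n h1 (by omega)
    have hord := hSNRord n h1 (by omega)
    have hSn : 0 < SNR (t n) := lt_trans hSNRT hord
    have hr : SNR T / SNR (t n) < 1 := (div_lt_one hSn).2 hord
    have hc2 : 0 < c (t n) ^ 2 := by
      rw [(hc (t n)).2]
      apply mul_pos (by positivity)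
      linarith
    rcases (hc (t n)).1.lt_or_eq with h | h
    · exact h
    · exfalso; rw [← h] at hc2; simp at hc2
  have key : ∀ k, k ≤ N - 2 → chain ν K k = Measure.pi (fun i => gaussianReal
      (a (t (N - 1 - k)) * xT i + b (t (N - 1 - k)) * x₀ i)
      (Real.toNNReal (c (t (N - 1 - k)) ^ 2))) := by
    intro k
    induction k with
    | zero => intro _; exact hν
    | succ k ih =>
      intro hk
      have hIH := ih (by omega)
      have hmn : N - 1 - (k + 1) = N - 2 - k := by omega
      rw [hmn]
      have h1n : 1 ≤ N - 2 - k := by omega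
      have hnN : N - 2 - k ≤ N - 1 := by omega
      have h1m : 1 ≤ N - 1 - k := by omega
      have hmN : N - 1 - k ≤ N - 1 := by omega
      have hcm := hcpos _ h1m hmN
      have hcn := hcpos _ h1n hnN
      have hρn := hρ (N - 2 - k)
      have hD : 0 ≤ c (t (N - 2 - k)) ^ 2 - ρ (N - 2 - k) ^ 2 := by
        have := pow_le_pow_left₀ hρn.1 hρn.2 2
        linarith
      set s := Real.sqrt (c (t (N - 2 - k)) ^ 2 - ρ (N - 2 - k) ^ 2) / c (t (N - 1 - k)) with hs
      have hKk : K k = fun x => Measure.pi fun i =>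
          gaussianReal (((a (t (N - 2 - k)) * xT i + b (t (N - 2 - k)) * x₀ i)
              - s * (a (t (N - 1 - k)) * xT i + b (t (N - 1 - k)) * x₀ i)) + s * x i)
            (Real.toNNReal (ρ (N - 2 - k) ^ 2)) := by
        funext x
        rw [hK k x]
        congr 1
        funext i
        congr 1
        rw [hs]
        ring
      rw [show chain ν K (k + 1) = (chain ν K k).bind (K k) from rfl, hIH, hKk]
      refine BridgeAux.pi_bind (fun i => a (t (N - 1 - k)) * xT i + b (t (N - 1 - k)) * x₀ i)
        (fun i => (a (t (N - 2 - k)) * xT i + b (t (N - 2 - k)) * x₀ i)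
          - s * (a (t (N - 1 - k)) * xT i + b (t (N - 1 - k)) * x₀ i))
        (fun i => a (t (N - 2 - k)) * xT i + b (t (N - 2 - k)) * x₀ i) s _ _ _
        (fun i => ?_)
      rw [BridgeAux.gauss_bind _ _ _ _ (sq_nonneg (ρ (N - 2 - k)))]
      congr 1
      · ring
      · congr 1
        rw [Real.coe_toNNReal _ (sq_nonneg _), hs, div_pow, Real.sq_sqrt hD,
          div_mul_cancel₀ _ (pow_ne_zero 2 hcm.ne')]
        ring
  intro n h1 h2
  have hkey := key (N - 1 - n) (by omega)
  rwa [show N - 1 - (N - 1 - n) = n from by omega] at hkey
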